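/- Let p be an odd prime, m ≥ 1, and A_1, A_2 m×m matrices over F_p with Q = (A_1 - A_2) + (A_1 - A_2)ᵀ of rank r over F_p. Then for all c_1, c_2 ∈ F_p^m, |∑_{x ∈ F_p^m} ω^{x A_1 xᵀ - x A_2 xᵀ + (c_1-c_2)·x}| ≤ p^{(2m-r)/2}, where ω = e^(2πi/p). -/

import Mathlib

open scoped BigOperators Matrix

noncomputable def omegaP (p : ℕ) : ℂ := Complex.exp (2 * Real.pi * Complex.I / p)

section aux
variable (p : ℕ) [Fact p.Prime]

lemma omegaP_prim : IsPrimitiveRoot (omegaP p) p :=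
  Complex.isPrimitiveRoot_exp p (Fact.out (p := p.Prime)).ne_zero

lemma omegaP_pow_p : omegaP p ^ p = 1 := (omegaP_prim p).pow_eq_one

lemma omegaP_pow_mod (k : ℕ) : omegaP p ^ (k % p) = omegaP p ^ k := by
  conv_rhs => rw [← Nat.div_add_mod k p, pow_add, pow_mul, omegaP_pow_p, one_pow, one_mul]

/-- The standard additive character of `ZMod p` via `omegaP`. -/
noncomputable def eChar : AddChar (ZMod p) ℂ where
  toFun a := omegaP p ^ a.val
  map_zero_eq_one' := by simp
  map_add_eq_mul' a b := by
    have : NeZero p := ⟨(Fact.out (p := p.Prime)).ne_zero⟩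
    simp only [ZMod.val_add, omegaP_pow_mod, pow_add]

lemma eChar_apply (a : ZMod p) : eChar p a = omegaP p ^ a.val := rfl

lemma eChar_eq_one_iff (a : ZMod p) : eChar p a = 1 ↔ a = 0 := by
  have : NeZero p := ⟨(Fact.out (p := p.Prime)).ne_zero⟩
  rw [eChar_apply, (omegaP_prim p).pow_eq_one_iff_dvd]
  constructor
  · intro h
    have := Nat.eq_zero_of_dvd_of_lt h (ZMod.val_lt a) |>.symm
    rcases Nat.eq_zero_of_dvd_of_lt h (ZMod.val_lt a) with h0
    · exact (ZMod.val_eq_zero a).mp h0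
  · rintro rfl; simp

lemma abs_omegaP : ‖omegaP p‖ = 1 := by
  rw [omegaP, Complex.norm_exp]
  have : (2 * (Real.pi:ℂ) * Complex.I / p).re = 0 := by
    simp [div_eq_mul_inv, Complex.mul_re, Complex.I_re, Complex.I_im]
  rw [this, Real.exp_zero]

lemma abs_eChar (a : ZMod p) : ‖eChar p a‖ = 1 := by
  rw [eChar_apply, norm_pow, abs_omegaP, one_pow]

lemma conj_eChar (a : ZMod p) : (starRingEnd ℂ) (eChar p a) = eChar p (-a) := by
  have h1 : eChar p a * eChar p (-a) = 1 := by
    rw [← AddChar.map_add_eq_mul, add_neg_cancel, AddChar.map_zero_eq_one]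
  have h2 : (starRingEnd ℂ) (eChar p a) * eChar p a = 1 := by
    rw [mul_comm, Complex.mul_conj, ← Complex.sq_norm, abs_eChar]
    norm_num
  have hne : eChar p a ≠ 0 := by
    intro h; rw [h, zero_mul] at h1; exact zero_ne_one h1
  have h1' : eChar p (-a) * eChar p a = 1 := by rw [mul_comm]; exact h1
  exact mul_right_cancel₀ hne (h2.trans h1'.symm)

/-- dot product with `v` as an additive monoid hom. -/
def dotHom {m : ℕ} (v : Fin m → ZMod p) : (Fin m → ZMod p) →+ ZMod p where
  toFun y := y ⬝ᵥ v
  map_zero' := zero_dotProduct v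
  map_add' y z := add_dotProduct y z v

lemma sum_eChar_dot {m : ℕ} (v : Fin m → ZMod p) :
    ∑ y : Fin m → ZMod p, eChar p (y ⬝ᵥ v) = if v = 0 then ((p : ℂ) ^ m) else 0 := by
  classical
  have hcard : (Fintype.card (Fin m → ZMod p) : ℂ) = (p : ℂ) ^ m := by
    simp [ZMod.card]
  set ψ : AddChar (Fin m → ZMod p) ℂ := (eChar p).compAddMonoidHom (dotHom p v) with hψ
  have : ∑ y : Fin m → ZMod p, eChar p (y ⬝ᵥ v) = ∑ y, ψ y := rfl
  rw [this, AddChar.sum_eq_ite]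
  have hiff : ψ = 0 ↔ v = 0 := by
    constructor
    · intro h
      by_contra hv
      obtain ⟨i, hi⟩ : ∃ i, v i ≠ 0 := by
        by_contra hc; push_neg at hc; exact hv (funext hc)
      have := congrArg (fun χ => χ (Pi.single i (v i)⁻¹)) h
      simp only [hψ, AddChar.compAddMonoidHom_apply] at this
      have hdot : (dotHom p v) (Pi.single i (v i)⁻¹) = 1 := by
        show (Pi.single i (v i)⁻¹) ⬝ᵥ v = 1
        rw [single_dotProduct, inv_mul_cancel₀ hi]
      rw [hdot] at this
      have hone : eChar p (1 : ZMod p) = 1 := by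
        have := this
        simpa using this
      rw [eChar_eq_one_iff] at hone
      have : (1 : ZMod p) ≠ 0 := one_ne_zero
      exact this hone
    · rintro rfl
      ext y
      show eChar p (y ⬝ᵥ 0) = 1
      rw [dotProduct_zero, AddChar.map_zero_eq_one]
  split_ifs with h1 h2 h2
  · exact hcard
  · exact absurd (hiff.mp h1) h2
  · exact absurd (hiff.mpr h2) h1
  · rfl

lemma card_ker_eq {m r : ℕ} (Q : Matrix (Fin m) (Fin m) (ZMod p)) (hrk : Q.rank = r) :
    (Finset.univ.filter (fun z : Fin m → ZMod p => Q.mulVec z = 0)).card = p ^ (m - r) := by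
  classical
  have h1 : (Finset.univ.filter (fun z : Fin m → ZMod p => Q.mulVec z = 0)).card
      = Fintype.card {z : Fin m → ZMod p // Q.mulVec z = 0} := by
    rw [Fintype.card_subtype]
  have he : {z : Fin m → ZMod p // Q.mulVec z = 0} ≃ LinearMap.ker Q.mulVecLin :=
    Equiv.subtypeEquivRight (fun z => by simp [LinearMap.mem_ker, Matrix.mulVecLin_apply])
  have h2 : Fintype.card {z : Fin m → ZMod p // Q.mulVec z = 0}
      = Fintype.card (LinearMap.ker Q.mulVecLin) := Fintype.card_congr he
  have h3 : Fintype.card (LinearMap.ker Q.mulVecLin)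
      = (Fintype.card (ZMod p)) ^ (Module.finrank (ZMod p) (LinearMap.ker Q.mulVecLin)) :=
    Module.card_eq_pow_finrank
  have hrn : Module.finrank (ZMod p) (LinearMap.range Q.mulVecLin)
      + Module.finrank (ZMod p) (LinearMap.ker Q.mulVecLin)
      = m := by
    rw [LinearMap.finrank_range_add_finrank_ker]
    simp [Module.finrank_pi]
  have hker : Module.finrank (ZMod p) (LinearMap.ker Q.mulVecLin) = m - r := by
    have : Module.finrank (ZMod p) (LinearMap.range Q.mulVecLin) = r := hrk
    omega
  rw [h1, h2, h3, hker, ZMod.card]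

end aux

lemma dot_transpose {p m : ℕ} (M : Matrix (Fin m) (Fin m) (ZMod p))
    (y z : Fin m → ZMod p) : y ⬝ᵥ Mᵀ.mulVec z = z ⬝ᵥ M.mulVec y := by
  rw [Matrix.dotProduct_mulVec, Matrix.vecMul_transpose, dotProduct_comm]

theorem stmt10 (p m r : ℕ) [Fact p.Prime] (hodd : Odd p) (hm : 0 < m)
    (A₁ A₂ : Matrix (Fin m) (Fin m) (ZMod p))
    (hr : ((A₁ - A₂) + (A₁ - A₂)ᵀ).rank = r)
    (c₁ c₂ : Fin m → ZMod p) :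
    ‖(∑ x : Fin m → ZMod p,
        omegaP p ^ ((x ⬝ᵥ A₁.mulVec x) - (x ⬝ᵥ A₂.mulVec x) + (c₁ - c₂) ⬝ᵥ x).val)‖
      ≤ Real.sqrt ((p : ℝ) ^ (2 * m - r)) := by
  classical
  set B := A₁ - A₂ with hB
  set Q := B + Bᵀ with hQ
  set c := c₁ - c₂ with hc
  set f : (Fin m → ZMod p) → ZMod p := fun x => x ⬝ᵥ B.mulVec x + c ⬝ᵥ x with hf
  set S : ℂ := ∑ x : Fin m → ZMod p, eChar p (f x) with hS
  -- the sum in the statement is S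
  have hrw : ∑ x : Fin m → ZMod p,
      omegaP p ^ ((x ⬝ᵥ A₁.mulVec x) - (x ⬝ᵥ A₂.mulVec x) + (c₁ - c₂) ⬝ᵥ x).val = S := by
    apply Finset.sum_congr rfl
    intro x _
    have : (x ⬝ᵥ A₁.mulVec x) - (x ⬝ᵥ A₂.mulVec x) + (c₁ - c₂) ⬝ᵥ x = f x := by
      simp only [hf, hB, hc, Matrix.sub_mulVec, dotProduct_sub]
    rw [this, eChar_apply]
  rw [hrw]
  -- r ≤ m
  have hrm : r ≤ m := by
    rw [← hr]
    exact Matrix.rank_le_width _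
  -- key identity
  have hkey : ∀ y z : Fin m → ZMod p, f (y + z) - f y = f z + y ⬝ᵥ Q.mulVec z := by
    intro y z
    simp only [hf, hQ, Matrix.mulVec_add, Matrix.add_mulVec, dotProduct_add,
      add_dotProduct]
    rw [dot_transpose B y z]
    ring
  -- S * conj S
  have hconj : (starRingEnd ℂ) S = ∑ y : Fin m → ZMod p, eChar p (-(f y)) := by
    rw [hS, map_sum]
    exact Finset.sum_congr rfl fun y _ => conj_eChar p (f y)
  have hSS : S * (starRingEnd ℂ) S
      = ∑ z : Fin m → ZMod p, eChar p (f z) * ∑ y : Fin m → ZMod p, eChar p (y ⬝ᵥ Q.mulVec z) := by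
    rw [hconj, hS, Finset.sum_mul_sum]
    rw [Finset.sum_comm]
    have step : ∀ y : Fin m → ZMod p,
        ∑ x : Fin m → ZMod p, eChar p (f x) * eChar p (-(f y))
          = ∑ z : Fin m → ZMod p, eChar p (f z) * eChar p (y ⬝ᵥ Q.mulVec z) := by
      intro y
      rw [← Fintype.sum_equiv (Equiv.addLeft y)
        (fun z => eChar p (f z) * eChar p (y ⬝ᵥ Q.mulVec z))
        (fun x => eChar p (f x) * eChar p (-(f y))) ?_]
      intro z
      show eChar p (f z) * eChar p (y ⬝ᵥ Q.mulVec z) = eChar p (f (y + z)) * eChar p (-(f y))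
      rw [← AddChar.map_add_eq_mul, ← AddChar.map_add_eq_mul, ← hkey y z]
      congr 1
      ring
    calc ∑ y : Fin m → ZMod p, ∑ x : Fin m → ZMod p, eChar p (f x) * eChar p (-(f y))
        = ∑ y : Fin m → ZMod p, ∑ z : Fin m → ZMod p,
            eChar p (f z) * eChar p (y ⬝ᵥ Q.mulVec z) := Finset.sum_congr rfl fun y _ => step y
      _ = ∑ z : Fin m → ZMod p, ∑ y : Fin m → ZMod p,
            eChar p (f z) * eChar p (y ⬝ᵥ Q.mulVec z) := Finset.sum_comm
      _ = _ := Finset.sum_congr rfl fun z _ => (Finset.mul_sum _ _ _).symm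
  -- bound the squared modulus
  have hbound : ‖S‖ * ‖S‖ ≤ (p : ℝ) ^ (2 * m - r) := by
    have h1 : ‖S‖ * ‖S‖ = ‖S * (starRingEnd ℂ) S‖ := by
      rw [norm_mul, Complex.norm_conj]
    rw [h1, hSS]
    have h2 : ‖(∑ z : Fin m → ZMod p,
        eChar p (f z) * ∑ y : Fin m → ZMod p, eChar p (y ⬝ᵥ Q.mulVec z))‖
        ≤ ∑ z : Fin m → ZMod p, ‖(eChar p (f z) * ∑ y, eChar p (y ⬝ᵥ Q.mulVec z))‖ := by
      have := norm_sum_le (Finset.univ)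
        (fun z : Fin m → ZMod p => eChar p (f z) * ∑ y, eChar p (y ⬝ᵥ Q.mulVec z))
      exact this
    refine h2.trans (le_of_eq ?_)
    have h3 : ∀ z : Fin m → ZMod p,
        ‖(eChar p (f z) * ∑ y, eChar p (y ⬝ᵥ Q.mulVec z))‖
        = if Q.mulVec z = 0 then ((p : ℝ) ^ m) else 0 := by
      intro z
      rw [norm_mul, abs_eChar, one_mul]
      have := sum_eChar_dot p (Q.mulVec z)
      rw [this]
      split_ifs with h
      · simp [norm_pow]
      · simp
    calc ∑ z : Fin m → ZMod p, ‖(eChar p (f z) * ∑ y, eChar p (y ⬝ᵥ Q.mulVec z))‖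
        = ∑ z : Fin m → ZMod p, (if Q.mulVec z = 0 then ((p : ℝ) ^ m) else 0) :=
          Finset.sum_congr rfl fun z _ => h3 z
      _ = ((Finset.univ.filter (fun z : Fin m → ZMod p => Q.mulVec z = 0)).card : ℝ)
            * (p : ℝ) ^ m := by rw [← Finset.sum_filter, Finset.sum_const, nsmul_eq_mul]
      _ = ((p : ℝ) ^ (m - r)) * (p : ℝ) ^ m := by
          rw [card_ker_eq p Q hr]; push_cast; ring
      _ = (p : ℝ) ^ (2 * m - r) := by
          rw [← pow_add]
          congr 1
          omega
  -- conclude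
  have habs : ‖S‖ = Real.sqrt (‖S‖ * ‖S‖) :=
    (Real.sqrt_mul_self (norm_nonneg S)).symm
  rw [habs]
  exact Real.sqrt_le_sqrt hbound
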